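/- Let k be a field, R an n-dimensional Noetherian local domain with maximal ideal 𝔪 which is a k-algebra with k → R/𝔪 an isomorphism, and let v: R∖{0} → ℤⁿ be a good valuation on R with value semigroup S = v(R∖{0}) ∪ {0}. Let 𝔞 ⊆ R be an 𝔪-primary k-subspace and let I(𝔞) = {v(f) : 0 ≠ f ∈ 𝔞}. Then S ∖ I(𝔞) is finite and dim_k(R/𝔞) = #(S ∖ I(𝔞)). -/

import Mathlib

open Filter

/-- The canonical embedding of `ℤⁿ` into `ℝⁿ`. -/
noncomputable def zToR {n : ℕ} (x : Fin n → ℤ) : Fin n → ℝ := fun i => (x i : ℝ)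

section ValAux
variable {α K R : Type} [LinearOrder α] [AddCommGroup α]
  [Field K] [CommRing R] [IsDomain R] [Algebra K R]
  (v : R → α)

lemma aux_vsmul (hv1 : ∀ f g : R, f ≠ 0 → g ≠ 0 → v (f * g) = v f + v g)
    (hv3 : ∀ c : K, c ≠ 0 → v (algebraMap K R c) = 0) :
    ∀ (c : K) (f : R), c ≠ 0 → f ≠ 0 → v (c • f) = v f := by
  intro c f hc hf
  have h0 : (algebraMap K R c) ≠ 0 := by
    simpa using (algebraMap K R).injective.ne_iff.mpr hc
  rw [Algebra.smul_def, hv1 _ _ h0 hf, hv3 c hc, zero_add]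

lemma aux_vneg (hv1 : ∀ f g : R, f ≠ 0 → g ≠ 0 → v (f * g) = v f + v g)
    (hv3 : ∀ c : K, c ≠ 0 → v (algebraMap K R c) = 0) :
    ∀ f : R, f ≠ 0 → v (-f) = v f := by
  intro f hf
  have := aux_vsmul (K := K) v hv1 hv3 (-1) f (by norm_num) hf
  simpa using this

lemma aux_vadd (hv1 : ∀ f g : R, f ≠ 0 → g ≠ 0 → v (f * g) = v f + v g)
    (hv2 : ∀ f g : R, f ≠ 0 → g ≠ 0 → f + g ≠ 0 → min (v f) (v g) ≤ v (f + g))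
    (hv3 : ∀ c : K, c ≠ 0 → v (algebraMap K R c) = 0) :
    ∀ f g : R, f ≠ 0 → g ≠ 0 → v f ≠ v g →
      f + g ≠ 0 ∧ (v (f + g) = v f ∨ v (f + g) = v g) := by
  have key : ∀ f g : R, f ≠ 0 → g ≠ 0 → v f < v g → f + g ≠ 0 ∧ v (f + g) = v f := by
    intro f g hf hg hlt
    have hne : f + g ≠ 0 := by
      intro h
      have : g = -f := by linear_combination (norm := module) h
      rw [this, aux_vneg (K := K) v hv1 hv3 f hf] at hlt
      exact lt_irrefl _ hlt
    refine ⟨hne, ?_⟩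
    by_contra hne2
    have h1 : v f < v (f + g) := by
      rcases min_le_iff.mp (hv2 f g hf hg hne) with h | h
      · exact lt_of_le_of_ne h (Ne.symm hne2)
      · exact lt_of_le_of_ne (le_trans hlt.le h) (Ne.symm hne2)
    have hng : (-g : R) ≠ 0 := neg_ne_zero.mpr hg
    have heq : (f + g) + -g = f := by ring
    have h2 := hv2 (f + g) (-g) hne hng (by rw [heq]; exact hf)
    rw [heq, aux_vneg (K := K) v hv1 hv3 g hg] at h2
    rcases min_le_iff.mp h2 with h | h
    · exact absurd h (not_le.mpr h1)
    · exact absurd h (not_le.mpr hlt)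
  intro f g hf hg hne
  rcases lt_or_gt_of_ne hne with h | h
  · obtain ⟨h1, h2⟩ := key f g hf hg h
    exact ⟨h1, Or.inl h2⟩
  · obtain ⟨h1, h2⟩ := key g f hg hf h
    rw [add_comm] at h1 h2
    exact ⟨h1, Or.inr h2⟩

lemma aux_vsum {ι : Type*} [DecidableEq ι] (hv1 : ∀ f g : R, f ≠ 0 → g ≠ 0 → v (f * g) = v f + v g)
    (hv2 : ∀ f g : R, f ≠ 0 → g ≠ 0 → f + g ≠ 0 → min (v f) (v g) ≤ v (f + g))
    (hv3 : ∀ c : K, c ≠ 0 → v (algebraMap K R c) = 0)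
    (w : ι → R) :
    ∀ s : Finset ι, s.Nonempty → (∀ i ∈ s, w i ≠ 0) →
      (∀ i ∈ s, ∀ j ∈ s, v (w i) = v (w j) → i = j) →
      (∑ i ∈ s, w i) ≠ 0 ∧ ∃ i ∈ s, v (∑ i ∈ s, w i) = v (w i) := by
  intro s
  induction s using Finset.induction_on with
  | empty => intro h; simp at h
  | insert a s hnotmem ih =>
    intro _ hw hdist
    rcases s.eq_empty_or_nonempty with rfl | hs
    · simpa using hw a (by simp)
    · have hw' : ∀ i ∈ s, w i ≠ 0 := fun i hi => hw i (Finset.mem_insert_of_mem hi)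
      have hdist' : ∀ i ∈ s, ∀ j ∈ s, v (w i) = v (w j) → i = j := fun i hi j hj =>
        hdist i (Finset.mem_insert_of_mem hi) j (Finset.mem_insert_of_mem hj)
      obtain ⟨hsne, i₀, hi₀, hvi₀⟩ := ih hs hw' hdist'
      have ha : w a ≠ 0 := hw a (Finset.mem_insert_self a s)
      have hvne : v (w a) ≠ v (∑ i ∈ s, w i) := by
        rw [hvi₀]
        intro h
        exact hnotmem (hdist a (Finset.mem_insert_self a s) i₀
          (Finset.mem_insert_of_mem hi₀) h ▸ hi₀)
      have := aux_vadd (K := K) v hv1 hv2 hv3 (w a) (∑ i ∈ s, w i) ha hsne hvne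
      rw [Finset.sum_insert hnotmem]
      refine ⟨this.1, ?_⟩
      rcases this.2 with h | h
      · exact ⟨a, Finset.mem_insert_self a s, h⟩
      · exact ⟨i₀, Finset.mem_insert_of_mem hi₀, h.trans hvi₀⟩

end ValAux

section Span
variable {α K R : Type} [LinearOrder α] [AddCommGroup α]
  [Field K] [CommRing R] [IsDomain R] [Algebra K R]

lemma aux_span (v : R → α)
    (hv4 : ∀ f g : R, f ≠ 0 → g ≠ 0 → v f = v g → ∃ c : K, c ≠ 0 ∧
      (g + algebraMap K R c * f = 0 ∨ v g < v (g + algebraMap K R c * f)))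
    (𝔞 : Submodule K R) (Sc : Set α) (hScfin : Sc.Finite)
    (hbig : ∀ f : R, f ≠ 0 → v f ∉ Sc → f ∈ 𝔞)
    (W : Submodule K (R ⧸ 𝔞))
    (hW : ∀ f : R, f ≠ 0 → f ∉ 𝔞 → v f ∈ Sc →
      ∃ g : R, g ≠ 0 ∧ (g ∈ 𝔞 ∨ 𝔞.mkQ g ∈ W) ∧ v g = v f) :
    ∀ f : R, 𝔞.mkQ f ∈ W := by
  have main : ∀ k : ℕ, ∀ f : R, f ≠ 0 → {x | x ∈ Sc ∧ v f < x}.ncard < k → 𝔞.mkQ f ∈ W := by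
    intro k
    induction k with
    | zero => intro f _ h; exact absurd h (Nat.not_lt_zero _)
    | succ k ih =>
      intro f hf hcard
      by_cases hmem : f ∈ 𝔞
      · rw [show 𝔞.mkQ f = 0 from (Submodule.Quotient.mk_eq_zero 𝔞).mpr hmem]
        exact W.zero_mem
      by_cases hSc : v f ∈ Sc
      swap
      · exact absurd (hbig f hf hSc) hmem
      obtain ⟨g, hg0, hgW, hgv⟩ := hW f hf hmem hSc
      obtain ⟨c, hc0, hcase⟩ := hv4 g f hg0 hf hgv
      have hgWq : 𝔞.mkQ (algebraMap K R c * g) ∈ W := by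
        have : algebraMap K R c * g = c • g := (Algebra.smul_def c g).symm
        rw [this, map_smul]
        rcases hgW with h | h
        · rw [show 𝔞.mkQ g = 0 from (Submodule.Quotient.mk_eq_zero 𝔞).mpr h]
          exact W.smul_mem c W.zero_mem
        · exact W.smul_mem c h
      set f' := f + algebraMap K R c * g with hf'
      have hfeq : 𝔞.mkQ f = 𝔞.mkQ f' - 𝔞.mkQ (algebraMap K R c * g) := by
        rw [← map_sub]; congr 1; rw [hf']; ring
      by_cases hf'0 : f' = 0
      · rw [hfeq, hf'0, map_zero]
        exact W.sub_mem W.zero_mem hgWq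
      have hlt : v f < v f' := by
        rcases hcase with h0 | hlt
        · exact absurd h0 hf'0
        · exact hlt
      have hmkf' : 𝔞.mkQ f' ∈ W := by
        by_cases hSc' : v f' ∈ Sc
        · apply ih f' hf'0
          have hsub : {x | x ∈ Sc ∧ v f' < x} ⊂ {x | x ∈ Sc ∧ v f < x} := by
            constructor
            · intro x hx; exact ⟨hx.1, lt_trans hlt hx.2⟩
            · intro hcon
              exact absurd (hcon ⟨hSc', hlt⟩).2 (lt_irrefl _)
          have := Set.ncard_lt_ncard hsub (hScfin.subset (fun x hx => hx.1))
          omega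
        · rw [show 𝔞.mkQ f' = 0 from (Submodule.Quotient.mk_eq_zero 𝔞).mpr
            (hbig f' hf'0 hSc')]
          exact W.zero_mem
      rw [hfeq]
      exact W.sub_mem hmkf' hgWq
  intro f
  by_cases hf : f = 0
  · rw [hf, map_zero]; exact W.zero_mem
  · exact main ({x | x ∈ Sc ∧ v f < x}.ncard + 1) f hf (Nat.lt_succ_self _)

end Span

section Cone
open Pointwise
variable {n : ℕ}

lemma aux_cone (A : Set (Fin n → ℝ)) (h0 : (0 : Fin n → ℝ) ∈ A)
    (hadd : ∀ x ∈ A, ∀ y ∈ A, x + y ∈ A) :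
    ∀ c : ℝ, 0 ≤ c → ∀ x ∈ closure (convexHull ℝ A), c • x ∈ closure (convexHull ℝ A) := by
  set D := convexHull ℝ A with hD
  have hD0 : (0 : Fin n → ℝ) ∈ D := subset_convexHull ℝ A h0
  have hDadd : ∀ x ∈ D, ∀ y ∈ D, x + y ∈ D := by
    intro x hx y hy
    have hAA : A + A ⊆ A := by
      rintro _ ⟨a, ha, b, hb, rfl⟩
      exact hadd a ha b hb
    have : x + y ∈ D + D := Set.add_mem_add hx hy
    rw [hD, ← convexHull_add] at this
    exact convexHull_mono hAA this
  have hDn : ∀ (m : ℕ), ∀ x ∈ D, (m : ℝ) • x ∈ D := by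
    intro m
    induction m with
    | zero => intro x _; simpa using hD0
    | succ m ih =>
      intro x hx
      have : ((m : ℝ) + 1) • x = (m : ℝ) • x + x := by rw [add_smul, one_smul]
      rw [Nat.cast_succ, this]
      exact hDadd _ (ih x hx) _ hx
  have hDθ : ∀ θ : ℝ, 0 ≤ θ → θ ≤ 1 → ∀ x ∈ D, θ • x ∈ D := by
    intro θ h0θ hθ1 x hx
    have := (convex_convexHull ℝ A) hx hD0 h0θ (by linarith : (0:ℝ) ≤ 1 - θ) (by ring)
    simpa using this
  have hDc : ∀ c : ℝ, 0 ≤ c → ∀ x ∈ D, c • x ∈ D := by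
    intro c hc x hx
    rcases le_or_gt c 1 with h | h
    · exact hDθ c hc h x hx
    · set m := ⌈c⌉₊ with hm
      have hmpos : (0:ℝ) < m := by
        have : (1:ℝ) ≤ m := by exact_mod_cast Nat.one_le_ceil_iff.mpr (by linarith)
        linarith
      have hcm : c ≤ (m : ℝ) := Nat.le_ceil c
      have : c • x = (c / m) • ((m : ℝ) • x) := by
        rw [smul_smul, div_mul_cancel₀]
        exact ne_of_gt hmpos
      rw [this]
      exact hDθ _ (div_nonneg hc hmpos.le) (by rw [div_le_one hmpos]; exact hcm) _
        (hDn m x hx)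
  intro c hc x hx
  have hcont : Continuous (fun y : Fin n → ℝ => c • y) := continuous_const_smul c
  have h1 : c • x ∈ (fun y => c • y) '' closure D := ⟨x, hx, rfl⟩
  have h2 : (fun y => c • y) '' closure D ⊆ closure ((fun y => c • y) '' D) :=
    image_closure_subset_closure_image hcont
  have h3 : (fun y : Fin n → ℝ => c • y) '' D ⊆ D := by
    rintro _ ⟨y, hy, rfl⟩
    exact hDc c hc y hy
  exact closure_mono h3 (h2 h1)

lemma aux_bound (C : Set (Fin n → ℝ)) (hCclosed : IsClosed C)
    (hCcone : ∀ c : ℝ, 0 ≤ c → ∀ x ∈ C, c • x ∈ C)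
    (ℓ : (Fin n → ℝ) →ₗ[ℝ] ℝ)
    (hℓnonneg : ∀ x ∈ C, 0 ≤ ℓ x) (hℓker : ∀ x ∈ C, ℓ x = 0 → x = 0)
    (b : ℝ) : ∃ M : ℝ, 0 ≤ M ∧ ∀ x ∈ C, ℓ x ≤ b → ‖x‖ ≤ M := by
  have hℓcont : Continuous ℓ := ℓ.continuous_of_finiteDimensional
  set D1 := C ∩ Metric.sphere (0 : Fin n → ℝ) 1 with hD1
  have hD1comp : IsCompact D1 := (isCompact_sphere 0 1).inter_left hCclosed
  have hmem : ∀ x ∈ C, x ≠ 0 → ‖x‖⁻¹ • x ∈ D1 := by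
    intro x hx hx0
    have hnorm : ‖x‖ ≠ 0 := norm_ne_zero_iff.mpr hx0
    refine ⟨hCcone _ (inv_nonneg.mpr (norm_nonneg x)) x hx, ?_⟩
    simp only [Metric.mem_sphere, dist_zero_right, norm_smul, norm_inv, norm_norm]
    exact inv_mul_cancel₀ hnorm
  rcases D1.eq_empty_or_nonempty with hemp | hne
  · refine ⟨0, le_refl 0, fun x hx _ => ?_⟩
    by_contra hcon
    have hx0 : x ≠ 0 := by
      intro h; rw [h] at hcon; simp at hcon
    exact absurd (hmem x hx hx0) (by rw [hemp]; exact Set.notMem_empty _)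
  · obtain ⟨y, hyD1, hymin⟩ := hD1comp.exists_isMinOn hne hℓcont.continuousOn
    have hynorm : ‖y‖ = 1 := by
      have := hyD1.2
      simpa [Metric.mem_sphere, dist_zero_right] using this
    have hε : 0 < ℓ y := by
      rcases lt_or_eq_of_le (hℓnonneg y hyD1.1) with h | h
      · exact h
      · exfalso
        have := hℓker y hyD1.1 h.symm
        rw [this] at hynorm
        simp at hynorm
    refine ⟨max 0 (b / ℓ y), le_max_left _ _, fun x hx hxb => ?_⟩
    by_cases hx0 : x = 0
    · rw [hx0]; simp
    · have hd := hmem x hx hx0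
      have h1 : ℓ y ≤ ℓ (‖x‖⁻¹ • x) := hymin hd
      rw [map_smul, smul_eq_mul] at h1
      have hnorm : 0 < ‖x‖ := norm_pos_iff.mpr hx0
      have h2 : ℓ y * ‖x‖ ≤ ℓ x := by
        rw [mul_comm]
        calc ‖x‖ * ℓ y ≤ ‖x‖ * (‖x‖⁻¹ * ℓ x) := by
              exact mul_le_mul_of_nonneg_left h1 hnorm.le
          _ = ℓ x := by field_simp
      have : ‖x‖ ≤ b / ℓ y := by
        rw [le_div_iff₀ hε]
        linarith
      exact this.trans (le_max_right _ _)

lemma aux_finite (C : Set (Fin n → ℝ)) (hCclosed : IsClosed C)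
    (hCcone : ∀ c : ℝ, 0 ≤ c → ∀ x ∈ C, c • x ∈ C)
    (ℓ : (Fin n → ℝ) →ₗ[ℝ] ℝ)
    (hℓnonneg : ∀ x ∈ C, 0 ≤ ℓ x) (hℓker : ∀ x ∈ C, ℓ x = 0 → x = 0)
    (b : ℝ) : {s : Fin n → ℤ | zToR s ∈ C ∧ ℓ (zToR s) ≤ b}.Finite := by
  obtain ⟨M, hM0, hM⟩ := aux_bound C hCclosed hCcone ℓ hℓnonneg hℓker b
  set B : ℤ := ⌈M⌉ with hB
  apply Set.Finite.subset (Set.Finite.pi (fun _ : Fin n => Set.finite_Icc (-B) B))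
  intro s hs
  have hnorm : ‖zToR s‖ ≤ M := hM _ hs.1 hs.2
  intro i _
  have h1 : ‖zToR s i‖ ≤ ‖zToR s‖ := norm_le_pi_norm (zToR s) i
  have h2 : |(s i : ℝ)| ≤ M := by
    have : ‖zToR s i‖ = |(s i : ℝ)| := rfl
    rw [this] at h1
    exact h1.trans hnorm
  rw [abs_le] at h2
  constructor
  · have : (-B : ℝ) ≤ (s i : ℝ) := by
      calc (-B : ℝ) ≤ -M := by
            simp only [neg_le_neg_iff]
            exact Int.le_ceil M
        _ ≤ (s i : ℝ) := h2.1
    exact_mod_cast this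
  · have : ((s i : ℝ)) ≤ (B : ℝ) := h2.2.trans (Int.le_ceil M)
    exact_mod_cast this
end Cone

lemma zToR_add' {n : ℕ} (a b : Fin n → ℤ) : zToR (a + b) = zToR a + zToR b := by
  funext i; simp [zToR]

lemma zToR_zero' {n : ℕ} : zToR (0 : Fin n → ℤ) = 0 := by
  funext i; simp [zToR]


/-- **Codimension equals the number of missing values**: for a good valuation `v` on `R`
and an `𝔪`-primary `k`-subspace `𝔞 ⊆ R`, the complement `S ∖ I(𝔞)` of the value set of
`𝔞` in the value semigroup is finite and `dim_k(R/𝔞) = #(S ∖ I(𝔞))`. -/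
theorem codim_eq_card_of_missing_values
    (n : ℕ) (K : Type) [Field K] (R : Type) [CommRing R] [IsDomain R]
    [IsNoetherianRing R] [IsLocalRing R] [Algebra K R]
    (hdim : ringKrullDim R = n)
    (hres : Function.Bijective
      ((Ideal.Quotient.mk (IsLocalRing.maximalIdeal R)).comp (algebraMap K R)))
    (ord : LinearOrder (Fin n → ℤ))
    (hord : ∀ a b c : Fin n → ℤ, ord.le a b → ord.le (a + c) (b + c))
    (v : R → Fin n → ℤ)
    (hv1 : ∀ f g : R, f ≠ 0 → g ≠ 0 → v (f * g) = v f + v g)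
    (hv2 : ∀ f g : R, f ≠ 0 → g ≠ 0 → f + g ≠ 0 →
      ord.le (ord.min (v f) (v g)) (v (f + g)))
    (hv3 : ∀ c : K, c ≠ 0 → v (algebraMap K R c) = 0)
    (hv4 : ∀ f g : R, f ≠ 0 → g ≠ 0 → v f = v g → ∃ c : K, c ≠ 0 ∧
      (g + algebraMap K R c * f = 0 ∨ ord.lt (v g) (v (g + algebraMap K R c * f))))
    (S : Set (Fin n → ℤ)) (hS : S = v '' {f : R | f ≠ 0} ∪ {0})
    (C : Set (Fin n → ℝ)) (hC : C = closure (convexHull ℝ (zToR '' S)))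
    (hCsalient : ∀ x ∈ C, -x ∈ C → x = 0)
    (ℓ : (Fin n → ℝ) →ₗ[ℝ] ℝ)
    (hℓnonneg : ∀ x ∈ C, 0 ≤ ℓ x) (hℓker : ∀ x ∈ C, ℓ x = 0 → x = 0)
    (r₀ : ℝ) (hr₀ : 0 < r₀)
    (hgood : ∀ f : R, f ≠ 0 → ∀ k : ℕ, 0 < k →
      (k : ℝ) * r₀ ≤ ℓ (zToR (v f)) → f ∈ IsLocalRing.maximalIdeal R ^ k)
    (𝔞 : Submodule K R)
    (t : ℕ) (ht : 0 < t)
    (haprim : ∀ f ∈ IsLocalRing.maximalIdeal R ^ t, f ∈ 𝔞)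
    (I : Set (Fin n → ℤ)) (hI : I = v '' {f : R | f ≠ 0 ∧ f ∈ 𝔞}) :
    (S \ I).Finite ∧ Module.finrank K (R ⧸ 𝔞) = (S \ I).ncard := by
  classical
  have hvS : ∀ f : R, f ≠ 0 → v f ∈ S := by
    intro f hf; rw [hS]; exact Or.inl ⟨f, hf, rfl⟩
  have hv1R : v (1 : R) = 0 := by
    have := hv3 1 one_ne_zero; simpa using this
  have hSval : ∀ s ∈ S, ∃ f : R, f ≠ 0 ∧ v f = s := by
    intro s hs; rw [hS] at hs
    rcases hs with ⟨f, hf, rfl⟩ | hs0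
    · exact ⟨f, hf, rfl⟩
    · exact ⟨1, one_ne_zero, by rw [hv1R, hs0]⟩
  -- the cone property
  have hCclosed : IsClosed C := by rw [hC]; exact isClosed_closure
  have hCcone : ∀ c : ℝ, 0 ≤ c → ∀ x ∈ C, c • x ∈ C := by
    rw [hC]
    apply aux_cone
    · refine ⟨0, ?_, zToR_zero'⟩
      rw [hS]; exact Or.inr rfl
    · rintro _ ⟨s, hs, rfl⟩ _ ⟨s', hs', rfl⟩
      refine ⟨s + s', ?_, zToR_add' s s'⟩
      obtain ⟨f, hf, rfl⟩ := hSval s hs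
      obtain ⟨g, hg, rfl⟩ := hSval s' hs'
      rw [← hv1 f g hf hg]
      exact hvS _ (mul_ne_zero hf hg)
  have hzC : ∀ s ∈ S, zToR s ∈ C := by
    intro s hs
    rw [hC]
    exact subset_closure (subset_convexHull ℝ _ ⟨s, hs, rfl⟩)
  -- the finite bounding region
  set Sc : Set (Fin n → ℤ) := {s | zToR s ∈ C ∧ ℓ (zToR s) ≤ (t : ℝ) * r₀} with hScdef
  have hScfin : Sc.Finite :=
    aux_finite C hCclosed hCcone ℓ hℓnonneg hℓker ((t : ℝ) * r₀)
  have hbig : ∀ f : R, f ≠ 0 → v f ∉ Sc → f ∈ 𝔞 := by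
    intro f hf hnot
    have hmem : zToR (v f) ∈ C := hzC _ (hvS f hf)
    have : ¬ ℓ (zToR (v f)) ≤ (t : ℝ) * r₀ := by
      intro h; exact hnot ⟨hmem, h⟩
    exact haprim f (hgood f hf t ht (le_of_not_ge this))
  -- S \ I ⊆ Sc
  have hTsub : S \ I ⊆ Sc := by
    rintro s ⟨hsS, hsI⟩
    obtain ⟨f, hf, rfl⟩ := hSval s hsS
    refine ⟨hzC _ hsS, ?_⟩
    by_contra hcon
    have : f ∈ 𝔞 := haprim f (hgood f hf t ht (le_of_not_ge hcon))
    exact hsI (by rw [hI]; exact ⟨f, ⟨hf, this⟩, rfl⟩)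
  have hTfin : (S \ I).Finite := hScfin.subset hTsub
  refine ⟨hTfin, ?_⟩
  -- choose representatives
  have hex : ∀ i : {x // x ∈ hTfin.toFinset}, ∃ f : R, f ≠ 0 ∧ v f = (i : Fin n → ℤ) := by
    intro i
    have : (i : Fin n → ℤ) ∈ S \ I := hTfin.mem_toFinset.mp i.2
    exact hSval _ this.1
  choose F hF0 hFv using hex
  set fam : {x // x ∈ hTfin.toFinset} → R ⧸ 𝔞 := fun i => 𝔞.mkQ (F i) with hfam
  set W : Submodule K (R ⧸ 𝔞) := Submodule.span K (Set.range fam) with hW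
  -- spanning
  have htop : ∀ q : R ⧸ 𝔞, q ∈ W := by
    have key : ∀ f : R, 𝔞.mkQ f ∈ W := by
      apply @aux_span (Fin n → ℤ) K R ord _ _ _ _ _ v hv4 𝔞 Sc hScfin hbig W
      intro f hf hfa hfSc
      by_cases hII : v f ∈ I
      · rw [hI] at hII
        obtain ⟨g, ⟨hg0, hga⟩, hgv⟩ := hII
        exact ⟨g, hg0, Or.inl hga, hgv⟩
      · have hT : v f ∈ hTfin.toFinset := hTfin.mem_toFinset.mpr ⟨hvS f hf, hII⟩
        refine ⟨F ⟨v f, hT⟩, hF0 _, Or.inr ?_, hFv _⟩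
        exact Submodule.subset_span ⟨⟨v f, hT⟩, rfl⟩
    intro q
    obtain ⟨f, rfl⟩ := 𝔞.mkQ_surjective q
    exact key f
  -- independence
  have hli : LinearIndependent K fam := by
    rw [Fintype.linearIndependent_iff]
    intro g hg
    by_contra hcon
    push_neg at hcon
    obtain ⟨i₂, hi₂⟩ := hcon
    set s : Finset {x // x ∈ hTfin.toFinset} := Finset.univ.filter (fun i => g i ≠ 0) with hsdef
    have hsne : s.Nonempty := ⟨i₂, by simp [hsdef, hi₂]⟩
    have hw0 : ∀ i, g i ≠ 0 → g i • F i ≠ 0 := by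
      intro i hgi
      rw [Algebra.smul_def]
      exact mul_ne_zero (by simpa using (algebraMap K R).injective.ne_iff.mpr hgi) (hF0 i)
    have hwv : ∀ i, g i ≠ 0 → v (g i • F i) = (i : Fin n → ℤ) := by
      intro i hgi
      rw [@aux_vsmul (Fin n → ℤ) K R ord _ _ _ _ _ v hv1 hv3 (g i) (F i) hgi (hF0 i)]
      exact hFv i
    have hsum := @aux_vsum (Fin n → ℤ) K R ord _ _ _ _ _ v _ _ hv1 hv2 hv3
      (fun i => g i • F i) s hsne
      (by intro i hi; exact hw0 i (by simpa [hsdef] using hi))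
      (by
        intro i hi j hj hvij
        have hgi : g i ≠ 0 := by simpa [hsdef] using hi
        have hgj : g j ≠ 0 := by simpa [hsdef] using hj
        rw [hwv i hgi, hwv j hgj] at hvij
        exact Subtype.ext hvij)
    obtain ⟨hne0, i₁, hi₁, hvi₁⟩ := hsum
    have hsumeq : ∑ i ∈ s, g i • F i = ∑ i, g i • F i := by
      rw [hsdef]
      exact Finset.sum_filter_of_ne (by intro i _ h hgi; exact h (by rw [hgi, zero_smul]))
    have hmem𝔞 : (∑ i ∈ s, g i • F i) ∈ 𝔞 := by
      rw [hsumeq]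
      have : 𝔞.mkQ (∑ i, g i • F i) = 0 := by
        rw [map_sum]
        simp only [map_smul]
        exact hg
      exact (Submodule.Quotient.mk_eq_zero 𝔞).mp this
    have hgi₁ : g i₁ ≠ 0 := by simpa [hsdef] using hi₁
    have hIn : v (∑ i ∈ s, g i • F i) ∈ I := by
      have h' : v (∑ i ∈ s, g i • F i) ∈ v '' {f : R | f ≠ 0 ∧ f ∈ 𝔞} :=
        ⟨_, ⟨hne0, hmem𝔞⟩, rfl⟩
      rwa [← hI] at h'
    rw [hvi₁, hwv i₁ hgi₁] at hIn
    have : (i₁ : Fin n → ℤ) ∈ S \ I := hTfin.mem_toFinset.mp i₁.2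
    exact this.2 hIn
  -- compute the rank
  have b : Module.Basis {x // x ∈ hTfin.toFinset} K (R ⧸ 𝔞) :=
    Module.Basis.mk hli (fun q _ => htop q)
  rw [Module.finrank_eq_card_basis b, Fintype.card_coe,
    Set.ncard_eq_toFinset_card (S \ I) hTfin]
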